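/- If the series ∑_k 1/a_n(k) converges for each n, and the infinite products ∏_k c_{1,n}(k) and ∏_k c_{2,n}(k) converge to nonzero limits, then the series ∑_k ‖C_{m,n}(k) − I‖ converges (for any fixed m, n), and consequently the infinite product of matrices C_{m,n} = ∏_{k=0}^∞ C_{m,n}(k) (products taken from right to left) converges to an invertible matrix. -/

import Mathlib

open Matrix Filter Finset

/-- The matrix `C_{m,n}(k)` from the quantum solid torus Dirac operator. -/
noncomputable def Cmat (a c1 c2 : ℕ → ℕ → ℝ) (m : ℤ) (n k : ℕ) :
    Matrix (Fin 2) (Fin 2) ℝ :=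
  !![1 / c1 n k, -(m : ℝ) / (a (n + 1) k * c1 n k);
     -(m : ℝ) / (a n (k + 1) * c1 n k),
     c2 n k + (m : ℝ) ^ 2 / (a n (k + 1) * a (n + 1) k * c1 n k)]


/-- Right-to-left partial product `C (k-1) * ⋯ * C 0`. -/
noncomputable def pprod (C : ℕ → Matrix (Fin 2) (Fin 2) ℝ) : ℕ → Matrix (Fin 2) (Fin 2) ℝ
  | 0 => 1
  | k + 1 => C k * pprod C k

attribute [local instance] Matrix.normedAddCommGroup

/-- max row sum norm on 2x2 matrices -/
noncomputable def Nn (A : Matrix (Fin 2) (Fin 2) ℝ) : ℝ :=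
  max (|A 0 0| + |A 0 1|) (|A 1 0| + |A 1 1|)

lemma Nn_nonneg (A : Matrix (Fin 2) (Fin 2) ℝ) : 0 ≤ Nn A := by
  have := abs_nonneg (A 0 0); have := abs_nonneg (A 0 1)
  unfold Nn; apply le_max_of_le_left; linarith

lemma abs_le_Nn (A : Matrix (Fin 2) (Fin 2) ℝ) (i j : Fin 2) : |A i j| ≤ Nn A := by
  fin_cases i <;> fin_cases j <;> unfold Nn <;>
    [ (apply le_max_of_le_left); (apply le_max_of_le_left);
      (apply le_max_of_le_right); (apply le_max_of_le_right)] <;>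
    simp <;> positivity

lemma norm_le_Nn (A : Matrix (Fin 2) (Fin 2) ℝ) : ‖A‖ ≤ Nn A := by
  rw [Matrix.norm_le_iff (Nn_nonneg A)]; intro i j
  exact abs_le_Nn A i j

lemma Nn_one : Nn (1 : Matrix (Fin 2) (Fin 2) ℝ) = 1 := by
  unfold Nn; norm_num

lemma Nn_add_le (A B : Matrix (Fin 2) (Fin 2) ℝ) : Nn (A + B) ≤ Nn A + Nn B := by
  unfold Nn
  have h0 := abs_add_le (A 0 0) (B 0 0); have h1 := abs_add_le (A 0 1) (B 0 1)
  have h2 := abs_add_le (A 1 0) (B 1 0); have h3 := abs_add_le (A 1 1) (B 1 1)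
  simp only [Matrix.add_apply]
  apply max_le <;> [apply le_trans (by linarith : _ ≤ (|A 0 0| + |A 0 1|) + (|B 0 0| + |B 0 1|));
                    apply le_trans (by linarith : _ ≤ (|A 1 0| + |A 1 1|) + (|B 1 0| + |B 1 1|))] <;>
    gcongr <;> simp [le_max_left, le_max_right]

lemma Nn_mul_le (A B : Matrix (Fin 2) (Fin 2) ℝ) : Nn (A * B) ≤ Nn A * Nn B := by
  have e : ∀ i j : Fin 2, (A * B) i j = A i 0 * B 0 j + A i 1 * B 1 j := by
    intro i j
    rw [Matrix.mul_apply, Fin.sum_univ_two]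
  have key : ∀ i : Fin 2, |(A * B) i 0| + |(A * B) i 1| ≤ (|A i 0| + |A i 1|) * Nn B := by
    intro i
    rw [e i 0, e i 1]
    calc |A i 0 * B 0 0 + A i 1 * B 1 0| + |A i 0 * B 0 1 + A i 1 * B 1 1|
        ≤ (|A i 0| * |B 0 0| + |A i 1| * |B 1 0|) + (|A i 0| * |B 0 1| + |A i 1| * |B 1 1|) := by
          have := abs_add_le (A i 0 * B 0 0) (A i 1 * B 1 0)
          have := abs_add_le (A i 0 * B 0 1) (A i 1 * B 1 1)
          simp only [abs_mul] at *; linarith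
      _ = |A i 0| * (|B 0 0| + |B 0 1|) + |A i 1| * (|B 1 0| + |B 1 1|) := by ring
      _ ≤ |A i 0| * Nn B + |A i 1| * Nn B := by
          gcongr <;> simp [Nn, le_max_left, le_max_right]
      _ = (|A i 0| + |A i 1|) * Nn B := by ring
  unfold Nn
  apply max_le
  · exact le_trans (key 0) (mul_le_mul_of_nonneg_right (le_max_left _ _) (Nn_nonneg B))
  · exact le_trans (key 1) (mul_le_mul_of_nonneg_right (le_max_right _ _) (Nn_nonneg B))

lemma Nn_neg (A : Matrix (Fin 2) (Fin 2) ℝ) : Nn (-A) = Nn A := by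
  unfold Nn; simp

lemma Nn_C_le (C : Matrix (Fin 2) (Fin 2) ℝ) : Nn C ≤ 1 + Nn (C - 1) := by
  have : C = 1 + (C - 1) := by abel
  calc Nn C = Nn (1 + (C - 1)) := by rw [← this]
    _ ≤ Nn 1 + Nn (C - 1) := Nn_add_le _ _
    _ = 1 + Nn (C - 1) := by rw [Nn_one]

lemma conv_lemma (C : ℕ → Matrix (Fin 2) (Fin 2) ℝ)
    (hs : Summable fun k => Nn (C k - 1)) :
    ∃ L, Tendsto (pprod C) atTop (nhds L) ∧
      ∀ i j, |(L - 1) i j| ≤ (∑' k, Nn (C k - 1)) * Real.exp (∑' k, Nn (C k - 1)) := by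
  set s : ℕ → ℝ := fun k => Nn (C k - 1) with hs_def
  have hs0 : ∀ k, 0 ≤ s k := fun k => Nn_nonneg _
  set S := ∑' k, s k with hS_def
  have hS0 : 0 ≤ S := tsum_nonneg hs0
  have hpart : ∀ K, ∑ k ∈ Finset.range K, s k ≤ S := fun K => Summable.sum_le_tsum _ (fun k _ => hs0 k) hs
  set M := Real.exp S with hM_def
  have hM0 : 0 < M := Real.exp_pos S
  have hP : ∀ k, Nn (pprod C k) ≤ M := by
    have key : ∀ k, Nn (pprod C k) ≤ ∏ j ∈ Finset.range k, (1 + s j) := by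
      intro k; induction k with
      | zero => simp [pprod, Nn_one]
      | succ k ih =>
        calc Nn (pprod C (k+1)) = Nn (C k * pprod C k) := rfl
          _ ≤ Nn (C k) * Nn (pprod C k) := Nn_mul_le _ _
          _ ≤ (1 + s k) * ∏ j ∈ Finset.range k, (1 + s j) := by
              apply mul_le_mul (Nn_C_le _) ih (Nn_nonneg _)
              have := hs0 k; linarith
          _ = ∏ j ∈ Finset.range (k+1), (1 + s j) := by
              rw [Finset.prod_range_succ]; ring
    intro k
    refine (key k).trans ?_
    calc ∏ j ∈ Finset.range k, (1 + s j) ≤ ∏ j ∈ Finset.range k, Real.exp (s j) := by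
          apply Finset.prod_le_prod (fun j _ => by linarith [hs0 j])
          intro j _; linarith [Real.add_one_le_exp (s j)]
      _ = Real.exp (∑ j ∈ Finset.range k, s j) := by rw [Real.exp_sum]
      _ ≤ M := Real.exp_le_exp.2 (hpart k)
  have hdiff : ∀ k, Nn (pprod C (k+1) - pprod C k) ≤ s k * M := by
    intro k
    have : pprod C (k+1) - pprod C k = (C k - 1) * pprod C k := by
      show C k * pprod C k - pprod C k = _
      rw [Matrix.sub_mul, Matrix.one_mul]
    rw [this]
    exact (Nn_mul_le _ _).trans (mul_le_mul_of_nonneg_left (hP k) (hs0 k))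
  have hcau : CauchySeq (pprod C) := by
    apply cauchySeq_of_dist_le_of_summable (fun k => s k * M)
    · intro k
      rw [dist_eq_norm]
      calc ‖pprod C k - pprod C (k+1)‖ ≤ Nn (pprod C k - pprod C (k+1)) := norm_le_Nn _
        _ = Nn (pprod C (k+1) - pprod C k) := by rw [← Nn_neg]; congr 1; abel
        _ ≤ s k * M := hdiff k
    · exact hs.mul_right M
  obtain ⟨L, hL⟩ := cauchySeq_tendsto_of_complete hcau
  refine ⟨L, hL, ?_⟩
  have hb : ∀ k, Nn (pprod C k - 1) ≤ (∑ j ∈ Finset.range k, s j) * M := by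
    intro k; induction k with
    | zero => simp [pprod, Nn]
    | succ k ih =>
      have e : pprod C (k+1) - 1 = (C k - 1) * pprod C k + (pprod C k - 1) := by
        show C k * pprod C k - 1 = _
        rw [Matrix.sub_mul, Matrix.one_mul]; abel
      calc Nn (pprod C (k+1) - 1) = Nn ((C k - 1) * pprod C k + (pprod C k - 1)) := by rw [e]
        _ ≤ Nn ((C k - 1) * pprod C k) + Nn (pprod C k - 1) := Nn_add_le _ _
        _ ≤ s k * M + (∑ j ∈ Finset.range k, s j) * M := by
            gcongr
            exact (Nn_mul_le _ _).trans (mul_le_mul_of_nonneg_left (hP k) (hs0 k))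
        _ = (∑ j ∈ Finset.range (k+1), s j) * M := by rw [Finset.sum_range_succ]; ring
  intro i j
  have hten : Tendsto (fun k => |(pprod C k - 1) i j|) atTop (nhds |(L - 1) i j|) := by
    have h1 : Tendsto (fun k => (pprod C k - 1) i j) atTop (nhds ((L - 1) i j)) := by
      have hc : Continuous fun A : Matrix (Fin 2) (Fin 2) ℝ => (A - 1) i j := by
        apply Continuous.comp (continuous_apply j)
        apply Continuous.comp (continuous_apply i)
        exact continuous_id.sub continuous_const
      exact (hc.continuousAt.tendsto).comp hL
    exact h1.abs
  apply le_of_tendsto hten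
  filter_upwards with k
  exact (abs_le_Nn _ i j).trans ((hb k).trans (mul_le_mul_of_nonneg_right (hpart k) hM0.le))

lemma prod_facts (c : ℕ → ℝ) (hc : ∀ k, 0 < c k ∧ c k ≤ 1) (J : ℝ) (hJne : J ≠ 0)
    (hT : Tendsto (fun K => ∏ k ∈ Finset.range K, c k) atTop (nhds J)) :
    0 < J ∧ (∀ k, J ≤ c k) ∧ Summable (fun k => 1 - c k) := by
  set P : ℕ → ℝ := fun K => ∏ k ∈ Finset.range K, c k with hP_def
  have hPpos : ∀ K, 0 < P K := fun K => Finset.prod_pos (fun k _ => (hc k).1)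
  have hPle1 : ∀ K, P K ≤ 1 := fun K =>
    Finset.prod_le_one (fun k _ => (hc k).1.le) (fun k _ => (hc k).2)
  have hanti : Antitone P := by
    apply antitone_nat_of_succ_le
    intro K
    have hh : P (K + 1) = P K * c K := Finset.prod_range_succ _ _
    rw [hh]
    nlinarith [(hc K).1, (hc K).2, hPpos K]
  have hJge : (0:ℝ) ≤ J := ge_of_tendsto' hT (fun K => (hPpos K).le)
  have hJpos : 0 < J := lt_of_le_of_ne hJge (Ne.symm hJne)
  have hJleP : ∀ K, J ≤ P K := by
    intro K
    apply le_of_tendsto hT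
    filter_upwards [eventually_ge_atTop K] with L hL
    exact hanti hL
  have hJlec : ∀ k, J ≤ c k := by
    intro k
    have h1 : J ≤ P (k + 1) := hJleP (k + 1)
    have h2 : P (k + 1) = P k * c k := Finset.prod_range_succ _ _
    nlinarith [hPle1 k, hPpos k, (hc k).1]
  refine ⟨hJpos, hJlec, ?_⟩
  apply summable_of_sum_range_le (c := -Real.log J)
  · intro k; simp [(hc k).2]
  · intro K
    have hlog : Real.log (P K) = ∑ k ∈ Finset.range K, Real.log (c k) := by
      rw [hP_def]
      exact Real.log_prod (fun k _ => (hc k).1.ne')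
    have h1 : ∑ k ∈ Finset.range K, (1 - c k) ≤ ∑ k ∈ Finset.range K, -Real.log (c k) := by
      apply Finset.sum_le_sum
      intro k _
      have := Real.log_le_sub_one_of_pos (hc k).1
      linarith
    have h2 : ∑ k ∈ Finset.range K, -Real.log (c k) = -Real.log (P K) := by
      rw [hlog, Finset.sum_neg_distrib]
    have h3 : Real.log J ≤ Real.log (P K) := Real.log_le_log hJpos (hJleP K)
    linarith

lemma entry_bound (mm x y u v J B : ℝ) (hx : 0 < x) (hy : 0 < y) (hJ : 0 < J)
    (hu1 : J ≤ u) (hu2 : u ≤ 1) (hv1 : 0 < v) (hv2 : v ≤ 1) (hB : 1/x ≤ B) :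
    max (|1/u - 1| + |-mm/(y*u)|) (|-mm/(x*u)| + |v + mm^2/(x*y*u) - 1|)
      ≤ (1-u)/J + |mm|/J * (1/y) + |mm|/J * (1/x) + (1-v) + (mm^2*B/J) * (1/y) := by
  have hu0 : 0 < u := lt_of_lt_of_le hJ hu1
  have hB0 : 0 < B := lt_of_lt_of_le (by positivity) hB
  have e1 : |1/u - 1| ≤ (1-u)/J := by
    have h : 1/u - 1 = (1-u)/u := by field_simp
    rw [h, abs_of_nonneg (div_nonneg (by linarith) hu0.le)]
    exact div_le_div_of_nonneg_left (by linarith) hJ hu1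
  have e2 : |-mm/(y*u)| ≤ |mm|/J * (1/y) := by
    rw [abs_div, abs_neg, abs_of_pos (by positivity : (0:ℝ) < y*u)]
    have h : |mm|/J * (1/y) = |mm|/(y*J) := by rw [div_mul_div_comm, mul_one, mul_comm J y]
    rw [h]
    exact div_le_div_of_nonneg_left (abs_nonneg _) (by positivity) (by nlinarith)
  have e3 : |-mm/(x*u)| ≤ |mm|/J * (1/x) := by
    rw [abs_div, abs_neg, abs_of_pos (by positivity : (0:ℝ) < x*u)]
    have h : |mm|/J * (1/x) = |mm|/(x*J) := by rw [div_mul_div_comm, mul_one, mul_comm J x]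
    rw [h]
    exact div_le_div_of_nonneg_left (abs_nonneg _) (by positivity) (by nlinarith)
  have hq2 : mm^2/(x*y*u) ≤ (mm^2*B/J) * (1/y) := by
    have h : mm^2/(x*y*u) = mm^2 * (1/x) * (1/u) * (1/y) := by
      rw [mul_one_div, mul_one_div, mul_one_div, div_div, div_div]
      ring_nf
    rw [h]
    have h2 : (mm^2*B/J) * (1/y) = mm^2 * B * (1/J) * (1/y) := by ring
    rw [h2]
    gcongr
  have e4 : |v + mm^2/(x*y*u) - 1| ≤ (1-v) + (mm^2*B/J) * (1/y) := by
    have hq : 0 ≤ mm^2/(x*y*u) := by positivity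
    rw [abs_le]
    constructor <;> nlinarith
  have h5 : 0 ≤ |mm|/J * (1/x) := by positivity
  have h6 : 0 ≤ |mm|/J * (1/y) := by positivity
  have h7 : 0 ≤ (1:ℝ)-v := by linarith
  have h8 : 0 ≤ (mm^2*B/J) * (1/y) := by positivity
  have h9 : 0 ≤ ((1:ℝ)-u)/J := div_nonneg (by linarith) hJ.le
  exact max_le (by linarith) (by linarith)

theorem stmt_1 (a c1 c2 : ℕ → ℕ → ℝ)
    (ha : ∀ n k, 0 < a n k)
    (hc1 : ∀ n k, 0 < c1 n k ∧ c1 n k ≤ 1)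
    (hc2 : ∀ n k, 0 < c2 n k ∧ c2 n k ≤ 1)
    (hsum : ∀ n, Summable fun k => 1 / a n k)
    (hprod1 : ∀ n, ∃ J : ℝ, J ≠ 0 ∧
      Tendsto (fun K => ∏ k ∈ Finset.range K, c1 n k) atTop (nhds J))
    (hprod2 : ∀ n, ∃ J : ℝ, J ≠ 0 ∧
      Tendsto (fun K => ∏ k ∈ Finset.range K, c2 n k) atTop (nhds J))
    (m : ℤ) (n : ℕ) :
    Summable (fun k => ‖Cmat a c1 c2 m n k - 1‖) ∧
      ∃ L : Matrix (Fin 2) (Fin 2) ℝ, IsUnit L ∧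
        Tendsto (pprod fun k => Cmat a c1 c2 m n k) atTop (nhds L) := by
  set C : ℕ → Matrix (Fin 2) (Fin 2) ℝ := fun k => Cmat a c1 c2 m n k with hC_def
  obtain ⟨J1, hJ1ne, hT1⟩ := hprod1 n
  obtain ⟨J2, hJ2ne, hT2⟩ := hprod2 n
  obtain ⟨hJ1pos, hJ1le, hs1⟩ := prod_facts (fun k => c1 n k) (fun k => hc1 n k) J1 hJ1ne hT1
  obtain ⟨hJ2pos, hJ2le, hs2⟩ := prod_facts (fun k => c2 n k) (fun k => hc2 n k) J2 hJ2ne hT2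
  set B := ∑' k, 1 / a n k with hB_def
  have hBle : ∀ k, 1 / a n (k + 1) ≤ B := by
    intro k
    exact Summable.le_tsum (hsum n) (k + 1) (fun j _ => by have := ha n j; positivity)
  -- the dominating summable sequence
  set g : ℕ → ℝ := fun k => (1 - c1 n k)/J1 + |(m:ℝ)|/J1 * (1/a (n+1) k)
    + |(m:ℝ)|/J1 * (1/a n (k+1)) + (1 - c2 n k) + ((m:ℝ)^2*B/J1) * (1/a (n+1) k) with hg_def
  have hg : Summable g := by
    apply Summable.add
    apply Summable.add
    apply Summable.add
    apply Summable.add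
    · exact hs1.div_const J1
    · exact ((hsum (n+1)).mul_left _)
    · exact (((summable_nat_add_iff 1).2 (hsum n)).mul_left _)
    · exact hs2
    · exact ((hsum (n+1)).mul_left _)
  have hNle : ∀ k, Nn (C k - 1) ≤ g k := by
    intro k
    have heq : Nn (C k - 1) =
        max (|1/c1 n k - 1| + |-(m:ℝ)/(a (n+1) k * c1 n k)|)
            (|-(m:ℝ)/(a n (k+1) * c1 n k)| + |c2 n k + (m:ℝ)^2/(a n (k+1) * a (n+1) k * c1 n k) - 1|) := by
      simp [Nn, hC_def, Cmat, Matrix.sub_apply, Matrix.one_apply]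
    rw [heq]
    exact entry_bound (m:ℝ) (a n (k+1)) (a (n+1) k) (c1 n k) (c2 n k) J1 B
      (ha n (k+1)) (ha (n+1) k) hJ1pos (hJ1le k) (hc1 n k).2 (hc2 n k).1 (hc2 n k).2 (hBle k)
  have hsN : Summable (fun k => Nn (C k - 1)) :=
    Summable.of_nonneg_of_le (fun k => Nn_nonneg _) hNle hg
  constructor
  · exact Summable.of_nonneg_of_le (fun k => norm_nonneg _)
      (fun k => (norm_le_Nn _).trans (hNle k)) hg
  -- determinants
  have hdetC : ∀ k, (C k).det ≠ 0 := by
    intro k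
    have hx := ha n (k+1); have hy := ha (n+1) k; have hu := (hc1 n k).1
    have : (C k).det = c2 n k / c1 n k := by
      rw [hC_def]
      show (Cmat a c1 c2 m n k).det = _
      rw [Cmat, Matrix.det_fin_two_of]
      field_simp
      ring
    rw [this]
    exact (div_pos (hc2 n k).1 hu).ne'
  have hdetP : ∀ K, (pprod C K).det ≠ 0 := by
    intro K; induction K with
    | zero => show (1 : Matrix (Fin 2) (Fin 2) ℝ).det ≠ 0; simp
    | succ K ih =>
      show (C K * pprod C K).det ≠ 0
      rw [Matrix.det_mul]
      exact mul_ne_zero (hdetC K) ih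
  obtain ⟨L, hL, _⟩ := conv_lemma C hsN
  -- pick K0 with small tail
  obtain ⟨K0, hK0⟩ : ∃ K0, (∑' k, Nn (C (k + K0) - 1)) < 1/8 := by
    have ht := tendsto_sum_nat_add (fun k => Nn (C k - 1))
    exact (ht.eventually_lt_const (by norm_num : (0:ℝ) < 1/8)).exists
  set C' : ℕ → Matrix (Fin 2) (Fin 2) ℝ := fun k => C (k + K0) with hC'_def
  have hsN' : Summable (fun k => Nn (C' k - 1)) := (summable_nat_add_iff K0).2 hsN
  obtain ⟨Q, hQ, hQb⟩ := conv_lemma C' hsN'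
  set S' := ∑' k, Nn (C' k - 1) with hS'_def
  have hS'0 : 0 ≤ S' := tsum_nonneg (fun k => Nn_nonneg _)
  have hS'lt : S' < 1/8 := hK0
  have hE : ∀ i j, |(Q - 1) i j| ≤ 3/8 := by
    intro i j
    refine (hQb i j).trans ?_
    have h1 : Real.exp S' ≤ 3 := by
      have : Real.exp S' ≤ Real.exp 1 := Real.exp_le_exp.2 (by linarith)
      nlinarith [Real.exp_one_lt_d9]
    calc S' * Real.exp S' ≤ (1/8) * 3 :=
          mul_le_mul hS'lt.le h1 (Real.exp_pos _).le (by norm_num)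
      _ = 3/8 := by norm_num
  have hdetQ : Q.det ≠ 0 := by
    have h00 := hE 0 0; have h01 := hE 0 1; have h10 := hE 1 0; have h11 := hE 1 1
    simp only [Matrix.sub_apply, Matrix.one_apply_eq, Matrix.one_apply_ne (by decide : (0:Fin 2) ≠ 1),
      Matrix.one_apply_ne (by decide : (1:Fin 2) ≠ 0), sub_zero] at h00 h01 h10 h11
    rw [Matrix.det_fin_two]
    rw [abs_le] at h00 h01 h10 h11
    have : 0 < Q 0 0 * Q 1 1 - Q 0 1 * Q 1 0 := by nlinarith
    exact this.ne'
  -- shift identity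
  have hshift : ∀ j, pprod C (K0 + j) = pprod C' j * pprod C K0 := by
    intro j; induction j with
    | zero => simp [pprod]
    | succ j ih =>
      show C (K0 + j) * pprod C (K0 + j) = (C' j * pprod C' j) * pprod C K0
      rw [ih, ← Matrix.mul_assoc]
      congr 2
      rw [hC'_def]
      simp [add_comm]
  have hQL : L = Q * pprod C K0 := by
    have h1 : Tendsto (fun j => pprod C (j + K0)) atTop (nhds L) :=
      hL.comp (tendsto_add_atTop_nat K0)
    have h2 : Tendsto (fun j => pprod C' j * pprod C K0) atTop (nhds (Q * pprod C K0)) := by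
      have hcm : Continuous fun A : Matrix (Fin 2) (Fin 2) ℝ => A * pprod C K0 :=
        continuous_id.matrix_mul continuous_const
      exact (hcm.continuousAt.tendsto).comp hQ
    have h3 : (fun j => pprod C (j + K0)) = fun j => pprod C' j * pprod C K0 := by
      funext j; rw [add_comm]; exact hshift j
    rw [h3] at h1
    exact tendsto_nhds_unique h1 h2
  refine ⟨L, ?_, hL⟩
  apply (Matrix.isUnit_iff_isUnit_det L).2
  apply isUnit_iff_ne_zero.2
  rw [hQL, Matrix.det_mul]
  exact mul_ne_zero hdetQ (hdetP K0)
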